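/- Let σ be a primitive sequence of substitutions over a finite alphabet A. Then there exists at least one and at most |A| limit sequences for σ. -/

import Mathlib

set_option linter.unusedSectionVars false

/-- The image of an infinite sequence under a (nonerasing) substitution: the `n`-th
letter of the concatenation `s (u 0) s (u 1) s (u 2) ⋯`. -/
def subApplyG {A : Type*} (s : A → List A) (u : ℕ → A) (n : ℕ) : A :=
  (((List.range (n + 1)).map u).flatMap s).getD n (u 0)

/-- The incidence matrix of a substitution. -/
def incMatG {A : Type*} [DecidableEq A] (s : A → List A) : Matrix A A ℕ :=
  Matrix.of fun i j => (s j).count i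

/-- Primitivity of a sequence of substitutions: for each `m` there is `n > m` such that
the product `M_m ⋯ M_{n-1}` of incidence matrices is strictly positive. -/
def PrimitiveSeq {A : Type*} [Fintype A] [DecidableEq A] (s : ℕ → A → List A) : Prop :=
  ∀ m : ℕ, ∃ n > m, ∀ i j : A,
    0 < (((List.range (n - m)).map fun k => incMatG (s (m + k))).prod) i j

/-- `w` is a limit sequence (S-adic sequence) for the directive sequence `s`. -/
def IsLimitSeq {A : Type*} (s : ℕ → A → List A) (w : ℕ → A) : Prop :=
  ∃ ws : ℕ → ℕ → A, ws 0 = w ∧ ∀ n, ws n = subApplyG (s n) (ws (n + 1))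

section Aux

variable {A : Type*}

/-- `QG s k n l = σ_n σ_{n+1} ⋯ σ_{n+k-1} (l)`. -/
def QG (s : ℕ → A → List A) : ℕ → ℕ → List A → List A
  | 0, _, l => l
  | k+1, n, l => (QG s k (n+1) l).flatMap (s n)

variable {s : ℕ → A → List A}

lemma QG_append (k n : ℕ) (l₁ l₂ : List A) :
    QG s k n (l₁ ++ l₂) = QG s k n l₁ ++ QG s k n l₂ := by
  induction k generalizing n with
  | zero => rfl
  | succ k ih => simp [QG, ih, List.flatMap_append]

lemma QG_nil (k n : ℕ) : QG s k n ([] : List A) = [] := by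
  induction k generalizing n with
  | zero => rfl
  | succ k ih => simp [QG, ih]

lemma QG_peel (k n : ℕ) (l : List A) :
    QG s (k+1) n l = QG s k n (l.flatMap (s (n+k))) := by
  induction k generalizing n l with
  | zero => simp [QG]
  | succ k ih =>
    show (QG s (k+1) (n+1) l).flatMap (s n) = _
    rw [ih (n+1) l]
    show QG s (k+1) n _ = _
    rw [show n+1+k = n+(k+1) by ring]

lemma QG_add (k₁ k₂ n : ℕ) (l : List A) :
    QG s (k₁ + k₂) n l = QG s k₁ n (QG s k₂ (n + k₁) l) := by
  induction k₂ generalizing l with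
  | zero => rfl
  | succ k₂ ih =>
    rw [show k₁ + (k₂+1) = (k₁ + k₂) + 1 by ring, QG_peel, ih, QG_peel]
    rw [show n + k₁ + k₂ = n + (k₁ + k₂) by ring]

lemma QG_singleton (k n : ℕ) (l : List A) :
    QG s k n l = l.flatMap (fun b => QG s k n [b]) := by
  induction l with
  | nil => simp [QG_nil]
  | cons a l ih =>
    rw [show a :: l = [a] ++ l from rfl, QG_append, List.flatMap_append, ← ih]
    simp

lemma le_length_flatMap (t : A → List A) (ht : ∀ a, t a ≠ []) (l : List A) :
    l.length ≤ (l.flatMap t).length := by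
  induction l with
  | nil => simp
  | cons a l ih =>
    rw [List.flatMap_cons, List.length_append, List.length_cons]
    have : 1 ≤ (t a).length := List.length_pos_iff.2 (ht a)
    omega

lemma le_length_QG (ht : ∀ n a, s n a ≠ []) (k n : ℕ) (l : List A) :
    l.length ≤ (QG s k n l).length := by
  induction k generalizing n l with
  | zero => exact le_refl _
  | succ k ih =>
    calc l.length ≤ (QG s k (n+1) l).length := ih _ _
    _ ≤ _ := le_length_flatMap _ (ht n) _

lemma flatMap_prefix {l₁ l₂ : List A} (t : A → List A) (h : l₁ <+: l₂) :
    l₁.flatMap t <+: l₂.flatMap t := by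
  obtain ⟨r, rfl⟩ := h
  exact ⟨r.flatMap t, (List.flatMap_append ..).symm⟩

lemma QG_prefix {l₁ l₂ : List A} (k n : ℕ) (h : l₁ <+: l₂) :
    QG s k n l₁ <+: QG s k n l₂ := by
  obtain ⟨r, rfl⟩ := h
  exact ⟨QG s k n r, (QG_append k n l₁ r).symm⟩

lemma subApplyG_eq_of_prefix (t : A → List A) (ht : ∀ a, t a ≠ []) (u : ℕ → A)
    (P : List A) (d : A) (hP : ∀ i (h : i < P.length), u i = P[i])
    (j : ℕ) (hj : j < (P.flatMap t).length) :
    subApplyG t u j = (P.flatMap t).getD j d := by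
  set F : List A := (List.range (j+1)).map u with hF
  have hFlen : F.length = j + 1 := by simp [hF]
  have h1 : P.take (j+1) <+: F := by
    rw [List.prefix_iff_eq_take]
    apply List.ext_getElem
    · simp [hF]; try omega
    · intro i hi hi'
      have hiP : i < P.length := by simp at hi; omega
      have hij : i < j + 1 := by simp at hi; omega
      simp only [List.getElem_take, hF, List.getElem_map, List.getElem_range]
      exact (hP i hiP).symm
  have h2 : j < ((P.take (j+1)).flatMap t).length := by
    rcases le_or_gt P.length (j+1) with h | h
    · rw [List.take_of_length_le h]; exact hj
    · have := le_length_flatMap t ht (P.take (j+1))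
      rw [List.length_take] at this
      omega
  have h3 : (P.take (j+1)).flatMap t <+: F.flatMap t := flatMap_prefix t h1
  have h4 : (P.take (j+1)).flatMap t <+: P.flatMap t :=
    flatMap_prefix t (List.take_prefix _ _)
  have hjF : j < (F.flatMap t).length := lt_of_lt_of_le h2 h3.length_le
  show (F.flatMap t).getD j (u 0) = (P.flatMap t).getD j d
  rw [List.getD_eq_getElem _ _ hjF, List.getD_eq_getElem _ _ hj,
    ← h3.getElem h2, ← h4.getElem h2]

/-- Any chain `ws` has `QG s k n [ws (n+k) 0]` as a prefix of `ws n`. -/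
lemma ws_prefix (ht : ∀ n a, s n a ≠ []) (ws : ℕ → ℕ → A)
    (hws : ∀ n, ws n = subApplyG (s n) (ws (n + 1))) (d : A) :
    ∀ k n j (hj : j < (QG s k n [ws (n+k) 0]).length),
      ws n j = (QG s k n [ws (n+k) 0])[j] := by
  intro k
  induction k with
  | zero =>
    intro n j hj
    simp only [QG] at hj ⊢
    have : j = 0 := by simpa using hj
    subst this
    simp
  | succ k ih =>
    intro n j hj
    have hidx : n + (k+1) = (n+1) + k := by ring
    set P : List A := QG s k (n+1) [ws ((n+1)+k) 0] with hPdef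
    have hP : ∀ i (h : i < P.length), ws (n+1) i = P[i] := fun i h => ih (n+1) i h
    have hQ : QG s (k+1) n [ws (n + (k+1)) 0] = P.flatMap (s n) := by
      rw [hidx]; rfl
    rw [hQ] at hj
    simp only [hQ]
    rw [hws n, subApplyG_eq_of_prefix (s n) (ht n) (ws (n+1)) P d hP j hj,
      List.getD_eq_getElem _ _ hj]

lemma ws_head (ws : ℕ → ℕ → A) (hws : ∀ n, ws n = subApplyG (s n) (ws (n + 1)))
    (n : ℕ) : ws n 0 = (s n (ws (n+1) 0)).headD (ws (n+1) 0) := by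
  rw [hws n]
  show (((List.range 1).map (ws (n+1))).flatMap (s n)).getD 0 (ws (n+1) 0) = _
  simp [List.range_succ, ← List.head?_eq_getElem?]

end Aux

section Counting

variable {A : Type*} [Fintype A] [DecidableEq A]

def MprodG (s : ℕ → A → List A) (k n : ℕ) : Matrix A A ℕ :=
  ((List.range k).map fun t => incMatG (s (n + t))).prod

variable {s : ℕ → A → List A}

lemma MprodG_zero (n : ℕ) : MprodG s 0 n = 1 := by simp [MprodG]

lemma MprodG_succ (k n : ℕ) :
    MprodG s (k+1) n = incMatG (s n) * MprodG s k (n+1) := by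
  unfold MprodG
  rw [List.range_succ_eq_map, List.map_cons, List.prod_cons, List.map_map]
  have h1 : ((fun t => incMatG (s (n + t))) ∘ Nat.succ)
      = fun t => incMatG (s (n + 1 + t)) := by
    funext t
    show incMatG (s (n + (t + 1))) = _
    rw [show n + (t + 1) = n + 1 + t by ring]
  rw [h1, show n + 0 = n from rfl]

lemma sum_map_count (g : A → ℕ) (l : List A) :
    (l.map g).sum = ∑ j, l.count j * g j := by
  induction l with
  | nil => simp
  | cons a l ih =>
    simp only [List.map_cons, List.sum_cons, ih, List.count_cons, beq_iff_eq]
    have : ∀ x : A, (l.count x + if a = x then 1 else 0) * g x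
        = l.count x * g x + (if a = x then g x else 0) := by
      intro x; split <;> simp [add_mul]
    simp only [this, Finset.sum_add_distrib, Finset.sum_ite_eq, Finset.mem_univ,
      if_true]
    omega

lemma length_eq_sum_count (l : List A) : l.length = ∑ i, l.count i := by
  induction l with
  | nil => simp
  | cons a l ih =>
    simp only [List.length_cons, ih, List.count_cons, beq_iff_eq,
      Finset.sum_add_distrib, Finset.sum_ite_eq, Finset.mem_univ, if_true]

lemma count_QG (k n : ℕ) (l : List A) (i : A) :
    (QG s k n l).count i = ∑ j, MprodG s k n i j * l.count j := by
  induction k generalizing n l i with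
  | zero =>
    simp [QG, MprodG_zero, Matrix.one_apply]
  | succ k ih =>
    show ((QG s k (n+1) l).flatMap (s n)).count i = _
    rw [List.count_flatMap]
    rw [show (List.count i ∘ s n) = fun j => (s n j).count i from rfl]
    rw [sum_map_count (fun j => (s n j).count i) (QG s k (n+1) l)]
    have hL : ∀ j : A, (QG s k (n+1) l).count j
        = ∑ p, MprodG s k (n+1) j p * l.count p := fun j => ih (n+1) l j
    simp only [hL, MprodG_succ, Matrix.mul_apply, Finset.sum_mul, Finset.mul_sum]
    rw [Finset.sum_comm]
    exact Finset.sum_congr rfl fun j _ => Finset.sum_congr rfl fun p _ => by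
      rw [show incMatG (s n) i p = (s n p).count i from rfl]; ring

lemma count_QG_singleton (k n : ℕ) (b i : A) :
    (QG s k n [b]).count i = MprodG s k n i b := by
  rw [count_QG]
  have : ∀ j : A, ([b] : List A).count j = if j = b then 1 else 0 := by
    intro j
    rw [List.count_cons, List.count_nil]
    simp only [beq_iff_eq]
    split <;> split <;> simp_all
  simp [this]

lemma length_QG_of_pos (k n : ℕ) (hpos : ∀ i j : A, 0 < MprodG s k n i j) (b : A) :
    Fintype.card A ≤ (QG s k n [b]).length := by
  rw [length_eq_sum_count, Fintype.card, Finset.card_eq_sum_ones]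
  exact Finset.sum_le_sum fun i _ => by
    rw [count_QG_singleton]; exact hpos i b

lemma length_QG_double (k n : ℕ) (h2 : ∀ b : A, 2 ≤ (QG s k n [b]).length)
    (l : List A) : 2 * l.length ≤ (QG s k n l).length := by
  induction l with
  | nil => simp [QG_nil]
  | cons a l ih =>
    have : QG s k n (a :: l) = QG s k n [a] ++ QG s k n l := by
      rw [show a :: l = [a] ++ l from rfl, QG_append]
    rw [this, List.length_append, List.length_cons]
    have := h2 a
    omega

lemma QG_growth (hprim : PrimitiveSeq s) (hcard : 2 ≤ Fintype.card A) :
    ∀ j n : ℕ, ∃ k, ∀ b : A, 2 ^ j ≤ (QG s k n [b]).length := by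
  intro j
  induction j with
  | zero =>
    intro n
    exact ⟨0, fun b => by simp [QG]⟩
  | succ j ih =>
    intro n
    obtain ⟨n', hn', hpos⟩ := hprim n
    set B := n' - n with hB
    have hpos' : ∀ i b : A, 0 < MprodG s B n i b := hpos
    obtain ⟨k₂, hk₂⟩ := ih (n + B)
    refine ⟨B + k₂, fun b => ?_⟩
    rw [QG_add]
    have hW : 2 ^ j ≤ (QG s k₂ (n + B) [b]).length := hk₂ b
    have h2 : ∀ c : A, 2 ≤ (QG s B n [c]).length := fun c =>
      le_trans hcard (length_QG_of_pos B n hpos' c)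
    calc (2:ℕ) ^ (j+1) = 2 * 2 ^ j := by ring
    _ ≤ 2 * (QG s k₂ (n + B) [b]).length := by omega
    _ ≤ _ := length_QG_double B n h2 _

end Counting

section Orbit

variable {A : Type*} [Fintype A] [DecidableEq A] {s : ℕ → A → List A}



def fG (s : ℕ → A → List A) (hne : ∀ n a, s n a ≠ []) (n : ℕ) (b : A) : A :=
  (s n b).head (hne n b)

def gG (s : ℕ → A → List A) (hne : ∀ n a, s n a ≠ []) : ℕ → ℕ → A → A
  | 0, _, b => b
  | k+1, n, b => fG s hne n (gG s hne k (n+1) b)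

lemma gG_succ_right (hne : ∀ n a, s n a ≠ []) (k n : ℕ) (b : A) :
    gG s hne (k+1) n b = gG s hne k n (fG s hne (n+k) b) := by
  induction k generalizing n with
  | zero => simp [gG]
  | succ k ih =>
    show fG s hne n (gG s hne (k+1) (n+1) b) = _
    rw [show (gG s hne (k+1) (n+1) b) = gG s hne k (n+1) (fG s hne (n+1+k) b) from ih (n+1),
      show n+1+k = n+(k+1) from by ring]
    rfl

noncomputable def GSet (s : ℕ → A → List A) (hne : ∀ n a, s n a ≠ []) (k n : ℕ) :
    Finset A := Finset.image (gG s hne k n) Finset.univ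

lemma GSet_nonempty (hne : ∀ n a, s n a ≠ []) (k n : ℕ) [Nonempty A] :
    (GSet s hne k n).Nonempty := by
  obtain ⟨b⟩ := ‹Nonempty A›
  exact ⟨gG s hne k n b, Finset.mem_image.2 ⟨b, Finset.mem_univ b, rfl⟩⟩

lemma GSet_anti (hne : ∀ n a, s n a ≠ []) (k n : ℕ) :
    GSet s hne (k+1) n ⊆ GSet s hne k n := by
  intro x hx
  obtain ⟨b, -, rfl⟩ := Finset.mem_image.1 hx
  rw [gG_succ_right]
  exact Finset.mem_image.2 ⟨_, Finset.mem_univ _, rfl⟩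

lemma GSet_anti' (hne : ∀ n a, s n a ≠ []) {k k' : ℕ} (h : k ≤ k') (n : ℕ) :
    GSet s hne k' n ⊆ GSet s hne k n := by
  induction k' with
  | zero => rw [Nat.le_zero.1 h]
  | succ k' ih =>
    rcases Nat.lt_or_ge k (k'+1) with h' | h'
    · exact (GSet_anti hne k' n).trans (ih (Nat.lt_succ_iff.1 h'))
    · rw [Nat.le_antisymm h h']

lemma GSet_stab (hne : ∀ n a, s n a ≠ []) (n : ℕ) :
    ∃ k0, ∀ k, k0 ≤ k → GSet s hne k n = GSet s hne k0 n := by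
  obtain ⟨v, ⟨k0, rfl⟩, hmin⟩ := Nat.lt_wfRel.wf.has_min
    (Set.range fun k => (GSet s hne k n).card) ⟨_, 0, rfl⟩
  refine ⟨k0, fun k hk => Finset.eq_of_subset_of_card_le (GSet_anti' hne hk n) ?_⟩
  exact Nat.le_of_not_lt (hmin _ ⟨k, rfl⟩)

lemma exists_orbit (hne : ∀ n a, s n a ≠ []) [Nonempty A] :
    ∃ a : ℕ → A, ∀ n, fG s hne n (a (n+1)) = a n := by
  choose k0f hk0f using GSet_stab hne
  set T : ℕ → Finset A := fun n => GSet s hne (k0f n) n with hT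
  have hTne : ∀ n, (T n).Nonempty := fun n => GSet_nonempty hne _ _
  have key : ∀ n (b : A), b ∈ T n → ∃ c, c ∈ T (n+1) ∧ fG s hne n c = b := by
    intro n b hb
    set K := max (k0f n) (k0f (n+1)) with hK
    have h1 : b ∈ GSet s hne (K+1) n := by
      rw [hk0f n (K+1) (le_trans (le_max_left _ _) (Nat.le_succ _))]
      exact hb
    obtain ⟨x, -, hx⟩ := Finset.mem_image.1 h1
    refine ⟨gG s hne K (n+1) x, ?_, hx⟩
    show gG s hne K (n+1) x ∈ GSet s hne (k0f (n+1)) (n+1)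
    rw [← hk0f (n+1) K (le_max_right _ _)]
    exact Finset.mem_image.2 ⟨x, Finset.mem_univ _, rfl⟩
  obtain ⟨b0, hb0⟩ := hTne 0
  choose c hc1 hc2 using key
  let F : ∀ n : ℕ, {b : A // b ∈ T n} := fun n =>
    Nat.rec ⟨b0, hb0⟩ (fun n p => ⟨c n p.1 p.2, hc1 n p.1 p.2⟩) n
  exact ⟨fun n => (F n).1, fun n => hc2 n (F n).1 (F n).2⟩


lemma exists_limit [Nonempty A] (hne : ∀ n a, s n a ≠ []) (hprim : PrimitiveSeq s)
    (hcard : 2 ≤ Fintype.card A) : ∃ w, IsLimitSeq s w := by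
  obtain ⟨a, ha⟩ := exists_orbit hne
  have hchain : ∀ k n : ℕ, QG s k n [a (n+k)] <+: QG s (k+1) n [a (n+(k+1))] := by
    intro k n
    rw [QG_peel, show n+(k+1) = n+k+1 from rfl]
    refine QG_prefix k n ?_
    have hh : (s (n+k) (a (n+k+1))).head (hne _ _) = a (n+k) := ha (n+k)
    have hdec : s (n+k) (a (n+k+1)) = a (n+k) :: (s (n+k) (a (n+k+1))).tail := by
      conv_lhs => rw [← List.cons_head_tail (l := s (n+k) (a (n+k+1))) (hne _ _)]
      rw [hh]
    rw [show ([a (n+k+1)] : List A).flatMap (s (n+k)) = s (n+k) (a (n+k+1)) by simp]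
    rw [hdec]
    exact ⟨_, rfl⟩
  have hmono : ∀ n k k' : ℕ, k ≤ k' →
      QG s k n [a (n+k)] <+: QG s k' n [a (n+k')] := by
    intro n k k' h
    induction k' with
    | zero => rw [Nat.le_zero.1 h]
    | succ k' ih =>
      rcases Nat.lt_or_ge k (k'+1) with h' | h'
      · exact (ih (Nat.lt_succ_iff.1 h')).trans (hchain k' n)
      · rw [Nat.le_antisymm h h']
  have hex : ∀ n j : ℕ, ∃ k, j < (QG s k n [a (n+k)]).length := by
    intro n j
    obtain ⟨k, hk⟩ := QG_growth hprim hcard j n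
    exact ⟨k, lt_of_lt_of_le (Nat.lt_two_pow_self (n := j)) (hk _)⟩
  choose K hK using hex
  set ws : ℕ → ℕ → A := fun n j => (QG s (K n j) n [a (n + K n j)]).getD j (a n)
    with hwsdef
  have wellDef : ∀ n j k (h : j < (QG s k n [a (n+k)]).length),
      ws n j = (QG s k n [a (n+k)])[j] := by
    intro n j k h
    set m := max k (K n j) with hm
    have h1 : QG s k n [a (n+k)] <+: QG s m n [a (n+m)] := hmono n k m (le_max_left _ _)
    have h2 : QG s (K n j) n [a (n+(K n j))] <+: QG s m n [a (n+m)] :=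
      hmono n (K n j) m (le_max_right _ _)
    show (QG s (K n j) n [a (n + K n j)]).getD j (a n) = _
    rw [List.getD_eq_getElem _ _ (hK n j), h2.getElem (hK n j), ← h1.getElem h]
  have hws : ∀ n, ws n = subApplyG (s n) (ws (n+1)) := by
    intro n
    funext j
    set k := K (n+1) j with hkdef
    set P : List A := QG s k (n+1) [a ((n+1)+k)] with hPdef
    have hjP : j < P.length := hK (n+1) j
    have hP : ∀ i (h : i < P.length), ws (n+1) i = P[i] := fun i h =>
      wellDef (n+1) i k h
    have hflat : P.flatMap (s n) = QG s (k+1) n [a (n+(k+1))] := by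
      rw [show n+(k+1) = (n+1)+k by ring]
      rfl
    have hjF : j < (P.flatMap (s n)).length :=
      lt_of_lt_of_le hjP (le_length_flatMap _ (hne n) _)
    have hjQ : j < (QG s (k+1) n [a (n+(k+1))]).length := by rw [← hflat]; exact hjF
    rw [subApplyG_eq_of_prefix (s n) (hne n) (ws (n+1)) P (a n) hP j hjF]
    rw [wellDef n j (k+1) hjQ]
    rw [List.getD_eq_getElem _ _ hjF]
    simp only [hflat]
  exact ⟨ws 0, ws, rfl, hws⟩

end Orbit

section Final

variable {A : Type*} [Fintype A] [DecidableEq A] {s : ℕ → A → List A}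

lemma sep_lemma (hne : ∀ n a, s n a ≠ []) (hprim : PrimitiveSeq s)
    (hcard : 2 ≤ Fintype.card A) (ws ws' : ℕ → ℕ → A)
    (hc : ∀ n, ws n = subApplyG (s n) (ws (n+1)))
    (hc' : ∀ n, ws' n = subApplyG (s n) (ws' (n+1)))
    (hdiff : ws 0 ≠ ws' 0) :
    ∃ N, ∀ n, N ≤ n → ws n 0 ≠ ws' n 0 := by
  obtain ⟨j, hj⟩ := Function.ne_iff.1 hdiff
  obtain ⟨k, hk⟩ := QG_growth hprim hcard j 0
  have hbase : ws k 0 ≠ ws' k 0 := by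
    intro heq
    have hlen : j < (QG s k 0 [ws (0+k) 0]).length := by
      rw [Nat.zero_add]
      exact lt_of_lt_of_le (Nat.lt_two_pow_self (n := j)) (hk _)
    have hlen' : j < (QG s k 0 [ws' (0+k) 0]).length := by
      rw [Nat.zero_add]
      exact lt_of_lt_of_le (Nat.lt_two_pow_self (n := j)) (hk _)
    have e1 : ws 0 j = (QG s k 0 [ws (0+k) 0])[j] :=
      ws_prefix hne ws hc (ws 0 0) k 0 j hlen
    have e2 : ws' 0 j = (QG s k 0 [ws' (0+k) 0])[j] :=
      ws_prefix hne ws' hc' (ws' 0 0) k 0 j hlen'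
    apply hj
    rw [e1, e2]
    congr 2
    rw [Nat.zero_add, heq]
  have hstep : ∀ n, ws (n+1) 0 = ws' (n+1) 0 → ws n 0 = ws' n 0 := by
    intro n h
    rw [ws_head ws hc n, ws_head ws' hc' n, h]
  refine ⟨k, fun n hn => ?_⟩
  induction n, hn using Nat.le_induction with
  | base => exact hbase
  | succ n hn ih => exact fun heq => ih (hstep n heq)

lemma card_bound [Nonempty A] (hne : ∀ n a, s n a ≠ []) (hprim : PrimitiveSeq s)
    (t : Finset (ℕ → A)) (ht : ∀ w ∈ t, IsLimitSeq s w) :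
    t.card ≤ Fintype.card A := by
  rcases le_or_gt (Fintype.card A) 1 with hcard | hcard
  · have hsub : Subsingleton A := Fintype.card_le_one_iff_subsingleton.1 hcard
    have hsub' : Subsingleton (ℕ → A) := ⟨fun f g => funext fun n => Subsingleton.elim _ _⟩
    have h1 : t.card ≤ 1 := Finset.card_le_one.2 fun a _ b _ => Subsingleton.elim a b
    have h2 : 1 ≤ Fintype.card A := Fintype.card_pos
    omega
  · classical
    set WS : (ℕ → A) → ℕ → ℕ → A := fun w =>
      if h : IsLimitSeq s w then h.choose else fun _ _ => Classical.arbitrary A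
      with hWSdef
    have hWS0 : ∀ w, IsLimitSeq s w → WS w 0 = w := by
      intro w h
      simp only [hWSdef, dif_pos h]
      exact h.choose_spec.1
    have hWSc : ∀ w, IsLimitSeq s w →
        ∀ n, WS w n = subApplyG (s n) (WS w (n+1)) := by
      intro w h
      simp only [hWSdef, dif_pos h]
      exact h.choose_spec.2
    have hsep : ∀ p : (ℕ → A) × (ℕ → A), ∃ N, p.1 ∈ t → p.2 ∈ t → p.1 ≠ p.2 →
        ∀ n, N ≤ n → WS p.1 n 0 ≠ WS p.2 n 0 := by
      rintro ⟨w, w'⟩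
      by_cases hin : w ∈ t ∧ w' ∈ t ∧ w ≠ w'
      · obtain ⟨h1, h2, h3⟩ := hin
        have hl := ht w h1
        have hl' := ht w' h2
        have hdiff : WS w 0 ≠ WS w' 0 := by
          rw [hWS0 w hl, hWS0 w' hl']
          exact h3
        obtain ⟨N, hN⟩ := sep_lemma hne hprim hcard (WS w) (WS w')
          (hWSc w hl) (hWSc w' hl') hdiff
        exact ⟨N, fun _ _ _ => hN⟩
      · exact ⟨0, fun ha hb hne' => absurd ⟨ha, hb, hne'⟩ hin⟩
    choose Nf hNf using hsep
    set N := (t ×ˢ t).sup Nf with hNdef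
    have := Finset.card_le_card_of_injOn (fun w => WS w N 0)
      (fun w _ => Finset.mem_univ (WS w N 0)) (s := t) (t := Finset.univ) ?_
    · rwa [Finset.card_univ] at this
    · intro w hw w' hw' heq
      by_contra hne'
      have hmem : (w, w') ∈ t ×ˢ t := Finset.mem_product.2 ⟨hw, hw'⟩
      exact hNf (w, w') hw hw' hne' N (Finset.le_sup hmem) heq

end Final

/-- A primitive sequence of substitutions over a finite alphabet `A` has at least one
and at most `|A|` limit sequences. -/
theorem stmt12 {A : Type*} [Fintype A] [Nonempty A] [DecidableEq A]
    (s : ℕ → A → List A) (hne : ∀ n a, s n a ≠ []) (hprim : PrimitiveSeq s) :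
    {w : ℕ → A | IsLimitSeq s w}.Nonempty ∧
    {w : ℕ → A | IsLimitSeq s w}.Finite ∧
    {w : ℕ → A | IsLimitSeq s w}.ncard ≤ Fintype.card A := by
  have hnonempty : {w : ℕ → A | IsLimitSeq s w}.Nonempty := by
    rcases le_or_gt 2 (Fintype.card A) with hcard | hcard
    · obtain ⟨w, hw⟩ := exists_limit hne hprim hcard
      exact ⟨w, hw⟩
    · have hsub : Subsingleton A :=
        Fintype.card_le_one_iff_subsingleton.1 (by omega)
      have hsub' : Subsingleton (ℕ → A) := ⟨fun f g => funext fun n => Subsingleton.elim _ _⟩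
      refine ⟨fun _ => Classical.arbitrary A,
        fun _ _ => Classical.arbitrary A, Subsingleton.elim _ _, fun n => Subsingleton.elim _ _⟩
  have hfin : {w : ℕ → A | IsLimitSeq s w}.Finite := by
    rw [← Set.not_infinite]
    intro h
    obtain ⟨tf, hsubf, hcardeq⟩ := h.exists_subset_card_eq (Fintype.card A + 1)
    have := card_bound hne hprim tf (fun w hw => hsubf hw)
    omega
  refine ⟨hnonempty, hfin, ?_⟩
  rw [Set.ncard_eq_toFinset_card _ hfin]
  exact card_bound hne hprim hfin.toFinset fun w hw => hfin.mem_toFinset.1 hw
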